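/- For generic values of q, t, and t_a, every Laurent polynomial in the space H_N^{qR} = Span{m_λ : λ ∈ Λ_N} is uniquely determined by its values at the grid points τq^ν, ν ∈ Λ_N. Equivalently, the determinant of the matrix M = [m_μ(τq^ν)]_{μ,ν∈Λ_N} (rows and columns ordered by any total order extending the dominance partial order) is nonzero as a Laurent polynomial in q for generic t and t_a; in particular, if Σ_{μ∈Λ_N} c_μ m_μ(τq^ν) = 0 for all ν ∈ Λ_N then all coefficients c_μ vanish. -/

import Mathlib

open scoped BigOperators Classical

noncomputable section

namespace QR

/-- q-shifted factorial `(a;q)_m`. -/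
def qPoch (q a : ℂ) (m : ℕ) : ℂ := ∏ i ∈ Finset.range m, (1 - a * q ^ i)

/-- dominance: weakly decreasing vector of nonnegative integers. -/
def isDominant {n : ℕ} (ν : Fin n → ℕ) : Prop := ∀ i j : Fin n, i ≤ j → ν j ≤ ν i

/-- the alcove `Λ_N` of dominant weights with entries at most `N`. -/
def alcove (n N : ℕ) : Finset (Fin n → ℕ) :=
  ((Finset.univ : Finset (Fin n → Fin (N + 1))).image fun ν i => (ν i : ℕ)).filter
    fun ν => isDominant ν

/-- dominance partial order on weights. -/
def domLE {n : ℕ} (μ lam : Fin n → ℕ) : Prop :=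
  ∀ k : Fin n, ∑ j ∈ Finset.univ.filter (· ≤ k), μ j ≤ ∑ j ∈ Finset.univ.filter (· ≤ k), lam j

/-- the orbit of a dominant weight under permutations and sign flips. -/
def signedOrbit {n : ℕ} (lam : Fin n → ℕ) : Finset (Fin n → ℤ) :=
  Finset.image
    (fun pe : Equiv.Perm (Fin n) × (Fin n → Bool) =>
      fun i => if pe.2 i then (lam (pe.1 i) : ℤ) else -(lam (pe.1 i) : ℤ))
    Finset.univ

/-- symmetrized monomial `m_λ`. -/
def mono {n : ℕ} (lam : Fin n → ℕ) (z : Fin n → ℂ) : ℂ :=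
  ∑ μ ∈ signedOrbit lam, ∏ i, z i ^ μ i

/-- numerator of the coefficient `V_{ε j}` of Koornwinder's operator. -/
def VNum {n : ℕ} (t : ℂ) (T : Fin 4 → ℂ) (ε : ℤ) (j : Fin n) (z : Fin n → ℂ) : ℂ :=
  (∏ r, (1 - T r * z j ^ ε)) *
    ∏ k ∈ Finset.univ.erase j, ((1 - t * z j ^ ε * z k) * (1 - t * z j ^ ε * (z k)⁻¹))

/-- denominator of the coefficient `V_{ε j}` of Koornwinder's operator. -/
def VDen {n : ℕ} (q : ℂ) (ε : ℤ) (j : Fin n) (z : Fin n → ℂ) : ℂ :=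
  ((1 - z j ^ (2 * ε)) * (1 - q * z j ^ (2 * ε))) *
    ∏ k ∈ Finset.univ.erase j, ((1 - z j ^ ε * z k) * (1 - z j ^ ε * (z k)⁻¹))

/-- coefficient `V_{ε j}` of Koornwinder's operator. -/
def Vcoef {n : ℕ} (q t : ℂ) (T : Fin 4 → ℂ) (ε : ℤ) (j : Fin n) (z : Fin n → ℂ) : ℂ :=
  VNum t T ε j z / VDen q ε j z

/-- Koornwinder's second order q-difference operator `D`. -/
def Dop {n : ℕ} (q t : ℂ) (T : Fin 4 → ℂ) (f : (Fin n → ℂ) → ℂ) (z : Fin n → ℂ) : ℂ :=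
  ∑ j, (Vcoef q t T 1 j z * (f (Function.update z j (q * z j)) - f z)
      + Vcoef q t T (-1) j z * (f (Function.update z j (q⁻¹ * z j)) - f z))

/-- eigenvalue `E_{λ,λ}`. -/
def Eval {n : ℕ} (q t : ℂ) (T : Fin 4 → ℂ) (lam : Fin n → ℕ) : ℂ :=
  ∑ i : Fin n,
    (q⁻¹ * (∏ r, T r) * t ^ (2 * n - (i : ℕ) - 2) * (q ^ lam i - 1)
      + t ^ (i : ℕ) * (q ^ (-(lam i : ℤ)) - 1))

/-- `p` is the monic multivariable Askey-Wilson polynomial attached to `lam`. -/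
def IsAW {n : ℕ} (q t : ℂ) (T : Fin 4 → ℂ) (lam : Fin n → ℕ) (p : (Fin n → ℂ) → ℂ) : Prop :=
  (∃ c : (Fin n → ℕ) →₀ ℂ,
    (∀ μ ∈ c.support, isDominant μ ∧ domLE μ lam ∧ μ ≠ lam) ∧
    ∀ z : Fin n → ℂ, (∀ i, z i ≠ 0) →
      p z = mono lam z + c.sum fun μ coef => coef * mono μ z) ∧
  ∀ z : Fin n → ℂ, (∀ i, z i ≠ 0) →
    (∀ j : Fin n, VDen q 1 j z ≠ 0 ∧ VDen q (-1) j z ≠ 0) →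
    Dop q t T p z = Eval q t T lam * p z

/-- `τ_j = t^(n-j) t_a`. -/
def tauv (n : ℕ) (t ta : ℂ) (i : Fin n) : ℂ := t ^ (n - 1 - (i : ℕ)) * ta

/-- the grid point `τ q^ν`. -/
def gridZ (n : ℕ) (q t ta : ℂ) (ν : Fin n → ℕ) : Fin n → ℂ := fun i => tauv n t ta i * q ^ ν i

/-- pairs `1 ≤ j < k ≤ n`. -/
def pairsF (n : ℕ) : Finset (Fin n × Fin n) := Finset.univ.filter fun p => p.1 < p.2

/-- the factor `c₀(ν)`, with `s` a chosen square root of `t₀t₁t₂t₃ q⁻¹`. -/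
def c0fac {n : ℕ} (t s : ℂ) (ν : Fin n → ℕ) : ℂ := ∏ i : Fin n, (t ^ (n - 1 - (i : ℕ)) * s) ^ ν i

/-- the square `c₀(ν)²` (a rational expression in the parameters). -/
def c0sq {n : ℕ} (q t : ℂ) (T : Fin 4 → ℂ) (ν : Fin n → ℕ) : ℂ :=
  ∏ i : Fin n, ((t ^ (n - 1 - (i : ℕ))) ^ 2 * (∏ r, T r) * q⁻¹) ^ ν i

/-- numerator of `C₊^{qR}(ν)` apart from the factor `c₀(ν)`. -/
def CpN (n : ℕ) (q t ta : ℂ) (ν : Fin n → ℕ) : ℂ :=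
  (∏ p ∈ pairsF n,
      qPoch q (tauv n t ta p.1 * tauv n t ta p.2) (ν p.1 + ν p.2) *
        qPoch q (tauv n t ta p.1 * (tauv n t ta p.2)⁻¹) (ν p.1 - ν p.2)) *
    ∏ i, qPoch q (tauv n t ta i ^ 2) (2 * ν i)

/-- denominator of `C₊^{qR}(ν)`. -/
def CpD (n : ℕ) (q t ta : ℂ) (T : Fin 4 → ℂ) (ν : Fin n → ℕ) : ℂ :=
  (∏ p ∈ pairsF n,
      qPoch q (t * tauv n t ta p.1 * tauv n t ta p.2) (ν p.1 + ν p.2) *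
        qPoch q (t * tauv n t ta p.1 * (tauv n t ta p.2)⁻¹) (ν p.1 - ν p.2)) *
    ∏ i, ∏ r, qPoch q (T r * tauv n t ta i) (ν i)

/-- numerator of `C₋^{qR}(ν)` apart from the factor `c₀(ν)`. -/
def CmN (n : ℕ) (q t ta : ℂ) (T : Fin 4 → ℂ) (ν : Fin n → ℕ) : ℂ :=
  (∏ p ∈ pairsF n,
      qPoch q (t⁻¹ * q * tauv n t ta p.1 * tauv n t ta p.2) (ν p.1 + ν p.2) *
        qPoch q (t⁻¹ * q * tauv n t ta p.1 * (tauv n t ta p.2)⁻¹) (ν p.1 - ν p.2)) *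
    ∏ i, ∏ r, qPoch q ((T r)⁻¹ * q * tauv n t ta i) (ν i)

/-- denominator of `C₋^{qR}(ν)`. -/
def CmD (n : ℕ) (q t ta : ℂ) (ν : Fin n → ℕ) : ℂ :=
  (∏ p ∈ pairsF n,
      qPoch q (q * tauv n t ta p.1 * tauv n t ta p.2) (ν p.1 + ν p.2) *
        qPoch q (q * tauv n t ta p.1 * (tauv n t ta p.2)⁻¹) (ν p.1 - ν p.2)) *
    ∏ i, qPoch q (q * tauv n t ta i ^ 2) (2 * ν i)

/-- `C₊^{qR}(ν)` (depends on the chosen square root `s`). -/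
def Cplus (n : ℕ) (q t ta s : ℂ) (T : Fin 4 → ℂ) (ν : Fin n → ℕ) : ℂ :=
  c0fac t s ν * CpN n q t ta ν / CpD n q t ta T ν

/-- `C₋^{qR}(ν)` (depends on the chosen square root `s`). -/
def Cminus (n : ℕ) (q t ta s : ℂ) (T : Fin 4 → ℂ) (ν : Fin n → ℕ) : ℂ :=
  c0fac t s ν * CmN n q t ta T ν / CmD n q t ta ν

/-- the discrete weight `Δ^{qR}(ν) = 1/(C₊^{qR}(ν) C₋^{qR}(ν))`, a rational expression. -/
def weightQR (n : ℕ) (q t ta : ℂ) (T : Fin 4 → ℂ) (ν : Fin n → ℕ) : ℂ :=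
  (CpD n q t ta T ν * CmD n q t ta ν) / (c0sq q t T ν * CpN n q t ta ν * CmN n q t ta T ν)

/-- the discrete bilinear form `⟨f,g⟩_N^{qR}`. -/
def braket (n N : ℕ) (q t ta : ℂ) (T : Fin 4 → ℂ) (f g : (Fin n → ℂ) → ℂ) : ℂ :=
  ∑ ν ∈ alcove n N, f (gridZ n q t ta ν) * g (gridZ n q t ta ν) * weightQR n q t ta T ν

/-! ### Auxiliary material for Statement 4 -/

section Aux

lemma mem_alcove_dominant {n N : ℕ} {μ : Fin n → ℕ} (h : μ ∈ alcove n N) : isDominant μ :=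
  (Finset.mem_filter.mp h).2

lemma mem_alcove_le {n N : ℕ} {μ : Fin n → ℕ} (h : μ ∈ alcove n N) : ∀ i, μ i ≤ N := by
  have h1 := (Finset.mem_filter.mp h).1
  obtain ⟨g, -, rfl⟩ := Finset.mem_image.mp h1
  intro i
  exact Nat.lt_succ_iff.mp (g i).isLt

lemma antitone_le_iff_lt_card {n : ℕ} (f : Fin n → ℤ) (hf : Antitone f) (v : ℤ) (i : Fin n) :
    v ≤ f i ↔ (i : ℕ) < (Finset.univ.filter fun j => v ≤ f j).card := by
  constructor
  · intro h
    have hsub : Finset.Iic i ⊆ Finset.univ.filter fun j => v ≤ f j := by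
      intro j hj
      simp only [Finset.mem_Iic] at hj
      simp only [Finset.mem_filter, Finset.mem_univ, true_and]
      exact le_trans h (hf hj)
    have := Finset.card_le_card hsub
    rw [Fin.card_Iic] at this
    omega
  · intro h
    by_contra hv
    have hsub : (Finset.univ.filter fun j => v ≤ f j) ⊆ Finset.Iio i := by
      intro j hj
      simp only [Finset.mem_filter, Finset.mem_univ, true_and] at hj
      simp only [Finset.mem_Iio]
      by_contra hij
      push_neg at hij
      exact hv (le_trans hj (hf hij))
    have := Finset.card_le_card hsub
    rw [Fin.card_Iio] at this
    omega

lemma antitone_perm_fix {n : ℕ} (f : Fin n → ℤ) (hf : Antitone f)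
    (π : Equiv.Perm (Fin n)) (hg : Antitone (f ∘ π)) : ∀ i, f (π i) = f i := by
  have hcard : ∀ v : ℤ, (Finset.univ.filter fun j => v ≤ f (π j)).card
      = (Finset.univ.filter fun j => v ≤ f j).card := by
    intro v
    apply Finset.card_equiv π
    intro a
    simp
  intro i
  apply le_antisymm
  · have h1 : (i : ℕ) < (Finset.univ.filter fun j => f (π i) ≤ f (π j)).card :=
      (antitone_le_iff_lt_card (f ∘ π) hg (f (π i)) i).mp le_rfl
    rw [hcard (f (π i))] at h1
    exact (antitone_le_iff_lt_card f hf (f (π i)) i).mpr h1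
  · have h1 : (i : ℕ) < (Finset.univ.filter fun j => f i ≤ f j).card :=
      (antitone_le_iff_lt_card f hf (f i) i).mp le_rfl
    rw [← hcard (f i)] at h1
    exact (antitone_le_iff_lt_card (f ∘ π) hg (f i) i).mpr h1

lemma rearr {n : ℕ} (c f : Fin n → ℤ) (hc : StrictAnti c) (hf : Antitone f)
    (π : Equiv.Perm (Fin n)) :
    (∑ i, c i * f (π i) ≤ ∑ i, c i * f i) ∧
      (∑ i, c i * f (π i) = ∑ i, c i * f i → ∀ i, f (π i) = f i) := by
  have hmono : Monovary c f := by
    intro i j hij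
    rcases lt_trichotomy i j with h | h | h
    · exact absurd (hf h.le) (not_le.mpr hij)
    · exact h ▸ le_rfl
    · exact (hc h).le
  have hle := hmono.sum_smul_comp_perm_le_sum_smul (σ := π)
  simp only [smul_eq_mul] at hle
  refine ⟨hle, fun heq => ?_⟩
  have := (hmono.sum_smul_comp_perm_eq_sum_smul_iff (σ := π))
  simp only [smul_eq_mul] at this
  have hmv : Monovary c (f ∘ π) := this.mp heq
  have hg : Antitone (f ∘ π) := by
    intro i j hij
    by_contra hlt
    push_neg at hlt
    have hcij := hmv hlt
    rcases eq_or_lt_of_le hij with rfl | h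
    · exact absurd rfl (ne_of_lt hlt)
    · exact absurd hcij (not_le.mpr (hc h))
  exact antitone_perm_fix f hf π hg

lemma coe_mem_signedOrbit {n : ℕ} (μ : Fin n → ℕ) :
    (fun i => (μ i : ℤ)) ∈ signedOrbit μ := by
  refine Finset.mem_image.mpr ⟨⟨1, fun _ => true⟩, Finset.mem_univ _, ?_⟩
  funext i; simp

lemma abs_le_of_mem_signedOrbit {n N : ℕ} (μ : Fin n → ℕ) (hN : ∀ i, μ i ≤ N)
    {μ' : Fin n → ℤ} (h : μ' ∈ signedOrbit μ) : ∀ i, |μ' i| ≤ (N : ℤ) := by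
  obtain ⟨⟨π, s⟩, -, rfl⟩ := Finset.mem_image.mp h
  intro i
  dsimp only
  have hb : ((μ (π i) : ℤ)) ≤ N := by exact_mod_cast hN (π i)
  have hb0 : 0 ≤ (μ (π i) : ℤ) := by positivity
  split_ifs <;> rw [abs_le] <;> constructor <;> omega

/-- the weight vector `c i = ν i + (n-1-i) + 1`. -/
def cwt {n : ℕ} (ν : Fin n → ℕ) (i : Fin n) : ℤ := (ν i : ℤ) + ((n - 1 - (i : ℕ) : ℕ) : ℤ) + 1

lemma cwt_pos {n : ℕ} (ν : Fin n → ℕ) (i : Fin n) : 0 < cwt ν i := by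
  unfold cwt; positivity

lemma cwt_strictAnti {n : ℕ} (ν : Fin n → ℕ) (hν : isDominant ν) : StrictAnti (cwt ν) := by
  intro i j hij
  unfold cwt
  have h1 : ((ν j : ℤ)) ≤ ν i := by exact_mod_cast hν i j hij.le
  have h2 : (n - 1 - (j : ℕ) : ℕ) < (n - 1 - (i : ℕ) : ℕ) := by
    have := j.isLt
    have hij' : (i : ℕ) < (j : ℕ) := hij
    omega
  have h2' : ((n - 1 - (j : ℕ) : ℕ) : ℤ) < ((n - 1 - (i : ℕ) : ℕ) : ℤ) := by exact_mod_cast h2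
  linarith

/-- Key lemma: the sorted nonnegative vector uniquely maximizes `∑ c i * μ' i` over the orbit. -/
lemma orbit_sum_le {n : ℕ} (μ ν : Fin n → ℕ) (hμ : isDominant μ) (hν : isDominant ν)
    {μ' : Fin n → ℤ} (h : μ' ∈ signedOrbit μ) :
    (∑ i, cwt ν i * μ' i ≤ ∑ i, cwt ν i * (μ i : ℤ)) ∧
      (∑ i, cwt ν i * μ' i = ∑ i, cwt ν i * (μ i : ℤ) → μ' = fun i => (μ i : ℤ)) := by
  obtain ⟨⟨π, s⟩, -, rfl⟩ := Finset.mem_image.mp h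
  dsimp only
  set c := cwt ν with hc
  have hμf : Antitone (fun i => (μ i : ℤ)) := fun i j hij => by
    dsimp only; exact_mod_cast hμ i j hij
  have hstep1 : ∀ i, (if s i then (μ (π i) : ℤ) else -(μ (π i) : ℤ)) ≤ (μ (π i) : ℤ) := by
    intro i
    have hb0 : 0 ≤ (μ (π i) : ℤ) := by positivity
    split_ifs <;> omega
  have hterm : ∀ i ∈ Finset.univ, c i * (if s i then (μ (π i) : ℤ) else -(μ (π i) : ℤ))
      ≤ c i * (μ (π i) : ℤ) := by
    intro i _
    exact mul_le_mul_of_nonneg_left (hstep1 i) (cwt_pos ν i).le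
  have hsum1 : ∑ i, c i * (if s i then (μ (π i) : ℤ) else -(μ (π i) : ℤ))
      ≤ ∑ i, c i * (μ (π i) : ℤ) := Finset.sum_le_sum hterm
  have hre := rearr c (fun i => (μ i : ℤ)) (cwt_strictAnti ν hν) hμf π
  constructor
  · exact hsum1.trans hre.1
  · intro heq
    have heq1 : ∑ i, c i * (if s i then (μ (π i) : ℤ) else -(μ (π i) : ℤ))
        = ∑ i, c i * (μ (π i) : ℤ) := le_antisymm hsum1 (by
      calc ∑ i, c i * (μ (π i) : ℤ) ≤ ∑ i, c i * (μ i : ℤ) := hre.1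
        _ = _ := heq.symm)
    have heq2 : ∑ i, c i * (μ (π i) : ℤ) = ∑ i, c i * (μ i : ℤ) := by
      rw [← heq1, heq]
    have hfix := hre.2 heq2
    have hterm' := (Finset.sum_eq_sum_iff_of_le hterm).mp heq1
    funext i
    have h1 := hterm' i (Finset.mem_univ i)
    have h2 : (if s i then (μ (π i) : ℤ) else -(μ (π i) : ℤ)) = (μ (π i) : ℤ) :=
      mul_left_cancel₀ (cwt_pos ν i).ne' h1
    rw [h2, hfix i]

/-- the entry polynomial: `(∏ z_i^N) m_μ` at the grid point `τ q^ν`, as a polynomial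
in the three parameters `q, t, t_a`. -/
def Epoly (n N : ℕ) (μ ν : Fin n → ℕ) : MvPolynomial (Fin 3) ℂ :=
  ∑ μ' ∈ signedOrbit μ, ∏ i : Fin n,
    (MvPolynomial.X 0 ^ (ν i * (μ' i + N).toNat) *
      MvPolynomial.X 1 ^ ((n - 1 - (i : ℕ)) * (μ' i + N).toNat) *
      MvPolynomial.X 2 ^ ((μ' i + N).toNat))

/-- the total degree weight of an orbit element. -/
def wf (n N : ℕ) (ν : Fin n → ℕ) (μ' : Fin n → ℤ) : ℕ :=
  ∑ i, (ν i + (n - 1 - (i : ℕ)) + 1) * (μ' i + N).toNat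

/-- substitute all three variables by a single one. -/
def psi : MvPolynomial (Fin 3) ℂ →+* Polynomial ℂ :=
  MvPolynomial.eval₂Hom Polynomial.C (fun _ => Polynomial.X)

lemma psi_Epoly (n N : ℕ) (μ ν : Fin n → ℕ) :
    psi (Epoly n N μ ν) = ∑ μ' ∈ signedOrbit μ, Polynomial.X ^ wf n N ν μ' := by
  unfold Epoly wf psi
  rw [map_sum]
  refine Finset.sum_congr rfl fun μ' _ => ?_
  rw [map_prod, ← Finset.prod_pow_eq_pow_sum]
  refine Finset.prod_congr rfl fun i _ => ?_
  simp only [map_mul, map_pow, MvPolynomial.eval₂Hom_X']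
  rw [← pow_add, ← pow_add]
  congr 1
  ring

lemma wf_cast (n N : ℕ) (μ ν : Fin n → ℕ) (hN : ∀ i, μ i ≤ N)
    {μ' : Fin n → ℤ} (h : μ' ∈ signedOrbit μ) :
    ((wf n N ν μ' : ℕ) : ℤ) = ∑ i, cwt ν i * (μ' i + N) := by
  unfold wf
  rw [Nat.cast_sum]
  refine Finset.sum_congr rfl fun i _ => ?_
  have habs := abs_le_of_mem_signedOrbit μ hN h i
  have h0 : (0 : ℤ) ≤ μ' i + N := by
    have := abs_le.mp habs
    omega
  rw [Nat.cast_mul, Int.toNat_of_nonneg h0]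
  unfold cwt
  push_cast
  ring

lemma wf_le (n N : ℕ) (μ ν : Fin n → ℕ) (hμ : isDominant μ) (hν : isDominant ν)
    (hN : ∀ i, μ i ≤ N) {μ' : Fin n → ℤ} (h : μ' ∈ signedOrbit μ) :
    wf n N ν μ' ≤ wf n N ν (fun i => (μ i : ℤ)) ∧
      (wf n N ν μ' = wf n N ν (fun i => (μ i : ℤ)) → μ' = fun i => (μ i : ℤ)) := by
  have hcast1 := wf_cast n N μ ν hN h
  have hcast2 := wf_cast n N μ ν hN (coe_mem_signedOrbit μ)
  have hos := orbit_sum_le μ ν hμ hν h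
  have hsplit : ∀ (f : Fin n → ℤ), ∑ i, cwt ν i * (f i + N)
      = (∑ i, cwt ν i * f i) + ∑ i, cwt ν i * N := by
    intro f
    rw [← Finset.sum_add_distrib]
    exact Finset.sum_congr rfl fun i _ => by ring
  have key : ∑ i, cwt ν i * (μ' i + N) ≤ ∑ i, cwt ν i * ((μ i : ℤ) + N) ∧
      (∑ i, cwt ν i * (μ' i + N) = ∑ i, cwt ν i * ((μ i : ℤ) + N)
        → μ' = fun i => (μ i : ℤ)) := by
    constructor
    · rw [hsplit, hsplit]
      exact add_le_add hos.1 le_rfl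
    · intro heq
      rw [hsplit, hsplit] at heq
      exact hos.2 (by omega)
  constructor
  · have := key.1
    rw [← hcast1, ← hcast2] at this
    exact_mod_cast this
  · intro heq
    apply key.2
    rw [← hcast1, ← hcast2, heq]

lemma entry_monic (n N : ℕ) (μ ν : Fin n → ℕ) (hμ : isDominant μ) (hν : isDominant ν)
    (hN : ∀ i, μ i ≤ N) :
    (psi (Epoly n N μ ν)).Monic ∧
      (psi (Epoly n N μ ν)).natDegree = wf n N ν (fun i => (μ i : ℤ)) := by
  set D := wf n N ν (fun i => (μ i : ℤ)) with hD
  have hdegle : (psi (Epoly n N μ ν)).natDegree ≤ D := by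
    rw [psi_Epoly]
    apply Polynomial.natDegree_sum_le_of_forall_le
    intro μ' hμ'
    rw [Polynomial.natDegree_X_pow]
    exact (wf_le n N μ ν hμ hν hN hμ').1
  have hcoeff : (psi (Epoly n N μ ν)).coeff D = 1 := by
    rw [psi_Epoly, Polynomial.finset_sum_coeff]
    rw [Finset.sum_eq_single (fun i => (μ i : ℤ))]
    · rw [Polynomial.coeff_X_pow, if_pos rfl]
    · intro μ' hμ' hne
      rw [Polynomial.coeff_X_pow, if_neg]
      intro heq
      exact hne ((wf_le n N μ ν hμ hν hN hμ').2 heq.symm)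
    · intro habs
      exact absurd (coe_mem_signedOrbit μ) habs
  have hmonic := Polynomial.monic_of_natDegree_le_of_coeff_eq_one D hdegle hcoeff
  refine ⟨hmonic, le_antisymm hdegle ?_⟩
  exact Polynomial.le_natDegree_of_ne_zero (by rw [hcoeff]; exact one_ne_zero)

def kst (n : ℕ) (i : Fin n) : ℕ := (n - 1 - (i : ℕ)) + 1
def ipr (n : ℕ) (a b : Fin n → ℕ) : ℕ := ∑ i, a i * b i
def R1 (n N : ℕ) (ν : Fin n → ℕ) : ℕ := N * ∑ i, ν i
def R2 (n N : ℕ) (μ : Fin n → ℕ) : ℕ := (∑ i, kst n i * μ i) + N * ∑ i, kst n i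

/-- the ℕ-valued degree `D(μ,ν)`. -/
def DD (n N : ℕ) (μ ν : Fin n → ℕ) : ℕ :=
  ∑ i, (ν i + kst n i) * (μ i + N)

lemma wf_coe_eq_DD (n N : ℕ) (μ ν : Fin n → ℕ) :
    wf n N ν (fun i => (μ i : ℤ)) = DD n N μ ν := by
  unfold wf DD kst
  refine Finset.sum_congr rfl fun i _ => ?_
  rw [show ((μ i : ℤ) + N) = ((μ i + N : ℕ) : ℤ) by push_cast; ring, Int.toNat_natCast]
  ring

lemma DD_expand (n N : ℕ) (μ ν : Fin n → ℕ) :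
    DD n N μ ν = ipr n ν μ + (R1 n N ν + R2 n N μ) := by
  unfold DD ipr R1 R2
  rw [Finset.mul_sum, Finset.mul_sum, ← Finset.sum_add_distrib, ← Finset.sum_add_distrib,
    ← Finset.sum_add_distrib]
  exact Finset.sum_congr rfl fun i _ => by ring

lemma ipr_le {n : ℕ} (a b : Fin n → ℕ) : 2 * ipr n a b ≤ ipr n a a + ipr n b b := by
  unfold ipr
  rw [Finset.mul_sum, ← Finset.sum_add_distrib]
  apply Finset.sum_le_sum
  intro i _
  zify
  nlinarith [sq_nonneg ((a i : ℤ) - (b i : ℤ))]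

lemma ipr_lt {n : ℕ} (a b : Fin n → ℕ) (hab : a ≠ b) :
    2 * ipr n a b < ipr n a a + ipr n b b := by
  obtain ⟨i₀, hi₀⟩ := Function.ne_iff.mp hab
  unfold ipr
  rw [Finset.mul_sum, ← Finset.sum_add_distrib]
  apply Finset.sum_lt_sum
  · intro i _
    zify
    nlinarith [sq_nonneg ((a i : ℤ) - (b i : ℤ))]
  · refine ⟨i₀, Finset.mem_univ _, ?_⟩
    zify
    nlinarith [sq_pos_of_ne_zero (a := (a i₀ : ℤ) - (b i₀ : ℤ))
      (sub_ne_zero.mpr (by exact_mod_cast hi₀))]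

lemma leibniz_lt (n N : ℕ) (σ : Equiv.Perm {x // x ∈ alcove n N}) (hσ : σ ≠ 1) :
    ∑ ν : {x // x ∈ alcove n N}, DD n N (σ ν).1 ν.1
      < ∑ ν : {x // x ∈ alcove n N}, DD n N ν.1 ν.1 := by
  have e1 : ∑ ν : {x // x ∈ alcove n N}, DD n N (σ ν).1 ν.1
      = (∑ ν : {x // x ∈ alcove n N}, ipr n ν.1 (σ ν).1)
        + ((∑ ν : {x // x ∈ alcove n N}, R1 n N ν.1)
          + ∑ ν : {x // x ∈ alcove n N}, R2 n N (σ ν).1) := by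
    rw [← Finset.sum_add_distrib, ← Finset.sum_add_distrib]
    exact Finset.sum_congr rfl fun ν _ => DD_expand n N (σ ν).1 ν.1
  have e2 : ∑ ν : {x // x ∈ alcove n N}, DD n N ν.1 ν.1
      = (∑ ν : {x // x ∈ alcove n N}, ipr n ν.1 ν.1)
        + ((∑ ν : {x // x ∈ alcove n N}, R1 n N ν.1)
          + ∑ ν : {x // x ∈ alcove n N}, R2 n N ν.1) := by
    rw [← Finset.sum_add_distrib, ← Finset.sum_add_distrib]
    exact Finset.sum_congr rfl fun ν _ => DD_expand n N ν.1 ν.1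
  have e3 : ∑ ν : {x // x ∈ alcove n N}, R2 n N (σ ν).1
      = ∑ ν : {x // x ∈ alcove n N}, R2 n N ν.1 :=
    Equiv.sum_comp σ (fun ν => R2 n N ν.1)
  rw [e1, e2, e3]
  apply Nat.add_lt_add_of_lt_of_le _ le_rfl
  obtain ⟨ν₀, hν₀⟩ : ∃ ν₀, σ ν₀ ≠ ν₀ := by
    by_contra hall
    push_neg at hall
    exact hσ (Equiv.ext_iff.mpr hall)
  have hstrict : ∑ ν : {x // x ∈ alcove n N}, 2 * ipr n ν.1 (σ ν).1
      < ∑ ν : {x // x ∈ alcove n N}, (ipr n ν.1 ν.1 + ipr n (σ ν).1 (σ ν).1) := by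
    apply Finset.sum_lt_sum
    · intro ν _
      exact ipr_le ν.1 (σ ν).1
    · refine ⟨ν₀, Finset.mem_univ _, ?_⟩
      exact ipr_lt ν₀.1 (σ ν₀).1 (fun h => hν₀ (Subtype.ext h).symm)
  rw [Finset.sum_add_distrib] at hstrict
  have hcomp : ∑ ν : {x // x ∈ alcove n N}, ipr n (σ ν).1 (σ ν).1
      = ∑ ν : {x // x ∈ alcove n N}, ipr n ν.1 ν.1 :=
    Equiv.sum_comp σ (fun ν => ipr n ν.1 ν.1)
  rw [hcomp, ← Finset.mul_sum] at hstrict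
  omega

/-- the polynomial matrix. -/
def Pmat (n N : ℕ) :
    Matrix {x // x ∈ alcove n N} {x // x ∈ alcove n N} (MvPolynomial (Fin 3) ℂ) :=
  fun μ ν => Epoly n N μ.1 ν.1

/-- the polynomial `P`: determinant of the polynomial matrix. -/
def Pdet (n N : ℕ) : MvPolynomial (Fin 3) ℂ := (Pmat n N).det

lemma psi_entry_monic (n N : ℕ) (μ ν : {x // x ∈ alcove n N}) :
    (psi (Epoly n N μ.1 ν.1)).Monic ∧
      (psi (Epoly n N μ.1 ν.1)).natDegree = DD n N μ.1 ν.1 := by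
  have := entry_monic n N μ.1 ν.1 (mem_alcove_dominant μ.2) (mem_alcove_dominant ν.2)
    (mem_alcove_le μ.2)
  rw [wf_coe_eq_DD] at this
  exact this

lemma Pdet_ne_zero (n N : ℕ) : Pdet n N ≠ 0 := by
  intro h0
  have hpsi : psi (Pdet n N) = 0 := by rw [h0, map_zero]
  rw [Pdet, RingHom.map_det] at hpsi
  set A : Matrix {x // x ∈ alcove n N} {x // x ∈ alcove n N} (Polynomial ℂ) :=
    psi.mapMatrix (Pmat n N) with hA
  have hAentry : ∀ μ ν, A μ ν = psi (Epoly n N μ.1 ν.1) := fun μ ν => rfl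
  set Dtot := ∑ μ : {x // x ∈ alcove n N}, DD n N μ.1 μ.1 with hDtot
  have hcoeff : A.det.coeff Dtot = 1 := by
    rw [Matrix.det_apply', Polynomial.finset_sum_coeff]
    rw [Finset.sum_eq_single (1 : Equiv.Perm {x // x ∈ alcove n N})]
    · simp only [Equiv.Perm.sign_one, Units.val_one, Int.cast_one, one_mul,
        Equiv.Perm.one_apply]
      have hmon : ∀ i ∈ (Finset.univ : Finset {x // x ∈ alcove n N}), (A i i).Monic :=
        fun i _ => (psi_entry_monic n N i i).1
      have hprodmon := Polynomial.monic_prod_of_monic Finset.univ _ hmon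
      have hdeg : (∏ i, A i i).natDegree = Dtot := by
        rw [Polynomial.natDegree_prod_of_monic _ _ hmon]
        exact Finset.sum_congr rfl fun i _ => (psi_entry_monic n N i i).2
      rw [← hdeg]
      exact hprodmon.coeff_natDegree
    · intro σ _ hσ
      have hlt : (∏ i, A (σ i) i).natDegree < Dtot := by
        calc (∏ i, A (σ i) i).natDegree ≤ ∑ i, (A (σ i) i).natDegree :=
              Polynomial.natDegree_prod_le _ _
          _ = ∑ i : {x // x ∈ alcove n N}, DD n N (σ i).1 i.1 :=
              Finset.sum_congr rfl fun i _ => (psi_entry_monic n N (σ i) i).2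
          _ < Dtot := leibniz_lt n N σ hσ
      have hz : (∏ i, A (σ i) i).coeff Dtot = 0 :=
        Polynomial.coeff_eq_zero_of_natDegree_lt hlt
      rw [← zsmul_eq_mul, Polynomial.coeff_smul, hz, smul_zero]
    · intro habs
      exact absurd (Finset.mem_univ _) habs
  rw [hpsi] at hcoeff
  simp at hcoeff

lemma gridZ_ne_zero (n : ℕ) (q t ta : ℂ) (hq : q ≠ 0) (ht : t ≠ 0) (hta : ta ≠ 0)
    (ν : Fin n → ℕ) (i : Fin n) : gridZ n q t ta ν i ≠ 0 := by
  unfold gridZ tauv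
  exact mul_ne_zero (mul_ne_zero (pow_ne_zero _ ht) hta) (pow_ne_zero _ hq)

lemma eval_Epoly (n N : ℕ) (μ ν : Fin n → ℕ) (hμN : ∀ i, μ i ≤ N)
    (q t ta : ℂ) (hq : q ≠ 0) (ht : t ≠ 0) (hta : ta ≠ 0) :
    MvPolynomial.eval ![q, t, ta] (Epoly n N μ ν)
      = (∏ i, gridZ n q t ta ν i ^ N) * mono μ (gridZ n q t ta ν) := by
  unfold Epoly mono
  rw [map_sum, Finset.mul_sum]
  refine Finset.sum_congr rfl fun μ' hμ' => ?_
  rw [map_prod, ← Finset.prod_mul_distrib]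
  refine Finset.prod_congr rfl fun i _ => ?_
  simp only [map_mul, map_pow, MvPolynomial.eval_X]
  have hz : gridZ n q t ta ν i ≠ 0 := gridZ_ne_zero n q t ta hq ht hta ν i
  have he : (((μ' i + N).toNat : ℤ)) = μ' i + N := by
    have := abs_le.mp (abs_le_of_mem_signedOrbit μ hμN hμ' i)
    exact Int.toNat_of_nonneg (by omega)
  have key : gridZ n q t ta ν i ^ N * gridZ n q t ta ν i ^ μ' i
      = q ^ (ν i * (μ' i + N).toNat) * t ^ ((n - 1 - (i : ℕ)) * (μ' i + N).toNat)
        * ta ^ ((μ' i + N).toNat) := by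
    calc gridZ n q t ta ν i ^ N * gridZ n q t ta ν i ^ μ' i
        = gridZ n q t ta ν i ^ (N : ℤ) * gridZ n q t ta ν i ^ μ' i := by
          rw [zpow_natCast]
      _ = gridZ n q t ta ν i ^ ((N : ℤ) + μ' i) := (zpow_add₀ hz _ _).symm
      _ = gridZ n q t ta ν i ^ (((μ' i + N).toNat : ℤ)) := by
          rw [he]; ring_nf
      _ = gridZ n q t ta ν i ^ ((μ' i + N).toNat) := zpow_natCast _ _
      _ = (t ^ (n - 1 - (i : ℕ)) * ta * q ^ ν i) ^ ((μ' i + N).toNat) := by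
          unfold gridZ tauv; ring_nf
      _ = _ := by
          rw [mul_pow, mul_pow, ← pow_mul, ← pow_mul]
          ring
  have h0 : (![q, t, ta] : Fin 3 → ℂ) 0 = q := rfl
  have h1 : (![q, t, ta] : Fin 3 → ℂ) 1 = t := rfl
  have h2 : (![q, t, ta] : Fin 3 → ℂ) 2 = ta := rfl
  rw [h0, h1, h2]
  exact key.symm

/-- the complex grid-value matrix. -/
def Mgrid (n N : ℕ) (q t ta : ℂ) :
    Matrix {x // x ∈ alcove n N} {x // x ∈ alcove n N} ℂ :=
  fun μ ν => mono μ.1 (gridZ n q t ta ν.1)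

lemma eval_Pdet (n N : ℕ) (q t ta : ℂ) (hq : q ≠ 0) (ht : t ≠ 0) (hta : ta ≠ 0) :
    MvPolynomial.eval ![q, t, ta] (Pdet n N)
      = (∏ ν : {x // x ∈ alcove n N}, ∏ i, gridZ n q t ta ν.1 i ^ N)
          * (Mgrid n N q t ta).det := by
  rw [Pdet, RingHom.map_det]
  have hmat : (MvPolynomial.eval ![q, t, ta] : MvPolynomial (Fin 3) ℂ →+* ℂ).mapMatrix
      (Pmat n N)
      = Matrix.of fun μ ν : {x // x ∈ alcove n N} =>
          (∏ i, gridZ n q t ta ν.1 i ^ N) * Mgrid n N q t ta μ ν := by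
    ext μ ν
    exact eval_Epoly n N μ.1 ν.1 (mem_alcove_le μ.2) q t ta hq ht hta
  rw [hmat, Matrix.det_mul_row]

lemma grid_determined (n N : ℕ) (q t ta : ℂ) (hq : q ≠ 0) (ht : t ≠ 0) (hta : ta ≠ 0)
    (hP : MvPolynomial.eval ![q, t, ta] (Pdet n N) ≠ 0) :
    ∀ c : (Fin n → ℕ) → ℂ,
      (∀ ν ∈ alcove n N, (∑ mu ∈ alcove n N, c mu * mono mu (gridZ n q t ta ν)) = 0) →
      ∀ mu ∈ alcove n N, c mu = 0 := by
  have hdet : (Mgrid n N q t ta).det ≠ 0 := by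
    intro h
    rw [eval_Pdet n N q t ta hq ht hta, h, mul_zero] at hP
    exact hP rfl
  intro c hc
  set v : {x // x ∈ alcove n N} → ℂ := fun μ => c μ.1 with hv
  have hvM : Matrix.vecMul v (Mgrid n N q t ta) = 0 := by
    funext ν
    have hsum : Matrix.vecMul v (Mgrid n N q t ta) ν
        = ∑ μ : {x // x ∈ alcove n N}, v μ * Mgrid n N q t ta μ ν := rfl
    rw [hsum]
    have : ∑ μ : {x // x ∈ alcove n N}, v μ * Mgrid n N q t ta μ ν
        = ∑ mu ∈ alcove n N, c mu * mono mu (gridZ n q t ta ν.1) := by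
      rw [Finset.univ_eq_attach]
      exact Finset.sum_attach (alcove n N) (fun mu => c mu * mono mu (gridZ n q t ta ν.1))
    rw [this, hc ν.1 ν.2]
    rfl
  have hU : IsUnit (Mgrid n N q t ta).det := Ne.isUnit hdet
  have hveq : v = 0 := by
    calc v = Matrix.vecMul v 1 := (Matrix.vecMul_one v).symm
      _ = Matrix.vecMul v (Mgrid n N q t ta * (Mgrid n N q t ta)⁻¹) := by
          rw [Matrix.mul_nonsing_inv _ hU]
      _ = Matrix.vecMul (Matrix.vecMul v (Mgrid n N q t ta)) ((Mgrid n N q t ta)⁻¹) :=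
          (Matrix.vecMul_vecMul _ _ _).symm
      _ = 0 := by rw [hvM, Matrix.zero_vecMul]
  intro mu hmu
  exact congrFun hveq ⟨mu, hmu⟩

end Aux

/-- For generic `q, t, t_a` (i.e. off the zero set of some nonzero polynomial
in these three parameters), every Laurent polynomial in `H_N^{qR} = Span{m_λ : λ ∈ Λ_N}` is
uniquely determined by its values at the grid points `τ q^ν`, `ν ∈ Λ_N`; in particular if
`∑_{μ∈Λ_N} c_μ m_μ(τ q^ν) = 0` for all `ν ∈ Λ_N` then all coefficients `c_μ`, `μ ∈ Λ_N`,
vanish. -/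
theorem statement4 (n N : ℕ) (hn : 1 ≤ n) :
    ∃ P : MvPolynomial (Fin 3) ℂ, P ≠ 0 ∧
      ∀ q t ta : ℂ, q ≠ 0 → t ≠ 0 → ta ≠ 0 →
        MvPolynomial.eval ![q, t, ta] P ≠ 0 →
        (∀ cf cg : (Fin n → ℕ) → ℂ,
          (∀ ν ∈ alcove n N,
            (∑ mu ∈ alcove n N, cf mu * mono mu (gridZ n q t ta ν)) =
              ∑ mu ∈ alcove n N, cg mu * mono mu (gridZ n q t ta ν)) →
          ∀ z : Fin n → ℂ, (∀ i, z i ≠ 0) →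
            (∑ mu ∈ alcove n N, cf mu * mono mu z) =
              ∑ mu ∈ alcove n N, cg mu * mono mu z) ∧
        (∀ c : (Fin n → ℕ) → ℂ,
          (∀ ν ∈ alcove n N, (∑ mu ∈ alcove n N, c mu * mono mu (gridZ n q t ta ν)) = 0) →
          ∀ mu ∈ alcove n N, c mu = 0) := by
  refine ⟨Pdet n N, Pdet_ne_zero n N, ?_⟩
  intro q t ta hq ht hta hP
  have part2 := grid_determined n N q t ta hq ht hta hP
  constructor
  · intro cf cg hfg z hz
    have hzero := part2 (fun m => cf m - cg m) (by
      intro ν hν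
      have : ∑ mu ∈ alcove n N, (cf mu - cg mu) * mono mu (gridZ n q t ta ν)
          = (∑ mu ∈ alcove n N, cf mu * mono mu (gridZ n q t ta ν))
            - ∑ mu ∈ alcove n N, cg mu * mono mu (gridZ n q t ta ν) := by
        rw [← Finset.sum_sub_distrib]
        exact Finset.sum_congr rfl fun mu _ => by ring
      rw [this, hfg ν hν, sub_self])
    refine Finset.sum_congr rfl fun mu hmu => ?_
    have h := hzero mu hmu
    have : cf mu = cg mu := by
      have := sub_eq_zero.mp h
      exact this
    rw [this]
  · exact part2


end QR
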